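/- In NIM with Cash with subtraction set A = {1, 2}, if Player 1 has d dollars, Player 2 has e dollars, the pile has n stones, and e < d < n/2 + 1 (i.e., Player 2 has strictly less money than Player 1 and Player 1 is below the middle-class threshold M₁(n)), then Player 1 wins. -/
import Mathlib


/-- NIM with Cash, A = {1,2}: if e < d < n/2 + 1 (Player 2 has strictly less
money than Player 1 and Player 1 is below the middle-class threshold M₁(n)),
then Player 1 wins. -/
theorem nimCash_12_poor_p1_wins (W : ℕ → ℕ → ℕ → Prop)
    (hW : ∀ n m m', W n m m' ↔
      ∃ a ∈ ({1, 2} : Finset ℕ), a ≤ n ∧ a ≤ m ∧ ¬ W (n - a) m' (m - a))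
    (n d e : ℕ) (hde : e < d) (hd : d < n / 2 + 1) :
    W n d e := by
  have key : ∀ e d n, e < d → d + e ≤ n → W n d e := by
    intro e
    induction e using Nat.strong_induction_on with
    | _ e ih =>
      intro d n hde hdn
      rw [hW]
      refine ⟨1, by simp, by omega, by omega, ?_⟩
      rw [hW]
      rintro ⟨b, hb, hbn, hbe, hw⟩
      simp only [Finset.mem_insert, Finset.mem_singleton] at hb
      exact hw (ih (e - b) (by omega) (d - 1) (n - 1 - b) (by omega) (by omega))
  exact key e d n hde (by omega)
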